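/- arXiv:1808.03373 — 2 statements merged into one kernel-verified Lean document; each statement's English description precedes it below -/
import Mathlib

section
/- Let I be a finite index set partitioned as I = R ∪ O with R ∩ O = ∅. Let x, Y, f, d : I → ℝ and p : I × I → ℝ satisfy: p_{ij} = 0 whenever j ∈ R; f_j = d_j for all j ∈ R; f_j = Σ_{i∈I} f_i p_{ij} for all j ∈ O. Define δ_j = −Y_j + Σ_{i∈I} p_{ij} Y_i + d_j·1[j ∈ R] and w_i = x_i − Σ_{j∈I} p_{ij} x_j. Then Σ_{j∈I} x_j δ_j = Σ_{i∈I} (f_i − Y_i) w_i. -/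
open Finset

/-- One-step drift in pressure form: the inner product of the queue vector with the
one-step queue change equals the pressure-weighted excess of steady flow over service. -/
theorem drift_pressure_form {I : Type*} [Fintype I] [DecidableEq I]
    (R O : Finset I)
    (hpart : R ∪ O = Finset.univ) (hdisj : R ∩ O = ∅)
    (x Y f d : I → ℝ) (p : I × I → ℝ)
    (hp : ∀ i j, j ∈ R → p (i, j) = 0)
    (hfR : ∀ j ∈ R, f j = d j)
    (hfO : ∀ j ∈ O, f j = ∑ i, f i * p (i, j)) :
    ∑ j, x j * (-(Y j) + (∑ i, p (i, j) * Y i) + (if j ∈ R then d j else 0))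
      = ∑ i, (f i - Y i) * (x i - ∑ j, p (i, j) * x j) := by
  have key : ∀ j, (if j ∈ R then d j else 0) = f j - ∑ i, f i * p (i, j) := by
    intro j
    by_cases h : j ∈ R
    · simp [h, hp _ _ h, hfR j h]
    · have hO : j ∈ O := by
        have : j ∈ R ∪ O := hpart ▸ Finset.mem_univ j
        simpa [h] using this
      simp [h, ← hfO j hO]
  have L : ∀ j, x j * (-(Y j) + (∑ i, p (i, j) * Y i) + (if j ∈ R then d j else 0))
      = (f j * x j - Y j * x j) + ∑ i, (Y i * p (i, j) * x j - f i * p (i, j) * x j) := by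
    intro j
    rw [key j, Finset.sum_sub_distrib, ← Finset.sum_mul, ← Finset.sum_mul]
    have h1 : ∑ i, p (i, j) * Y i = ∑ i, Y i * p (i, j) := by
      exact Finset.sum_congr rfl fun i _ => mul_comm _ _
    rw [h1]; ring
  have Rr : ∀ i, (f i - Y i) * (x i - ∑ j, p (i, j) * x j)
      = (f i * x i - Y i * x i) + ∑ j, (Y i * p (i, j) * x j - f i * p (i, j) * x j) := by
    intro i
    simp only [mul_assoc]
    rw [Finset.sum_sub_distrib, ← Finset.mul_sum, ← Finset.mul_sum]
    ring
  simp only [L, Rr]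
  rw [Finset.sum_add_distrib, Finset.sum_add_distrib, Finset.sum_comm]
end

section
/- Let (Ω, ℱ, μ) be a probability space with a filtration (ℱ_t)_{t∈ℕ}, and let X_t : Ω → ℝⁿ be a sequence of random vectors adapted to (ℱ_t) such that ‖X_t‖² (squared Euclidean norm) is integrable for every t. Suppose there exist ε > 0 and K ≥ 0 such that for every t, almost surely E[‖X_{t+1}‖² | ℱ_t] ≤ ‖X_t‖² − 2ε·‖X_t‖₁ + K, where ‖x‖₁ = Σ_i |x_i|. Then limsup_{T→∞} (1/T)·Σ_{t=0}^{T−1} E[‖X_t‖₁] ≤ K/(2ε); in particular there exists a finite constant bounding all Cesàro averages (1/T)·Σ_{t=0}^{T−1} E[‖X_t‖₁], i.e., the process is strongly stable. -/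
open Finset Filter MeasureTheory

/-- Foster–Lyapunov strong-stability criterion with Lyapunov function the squared
Euclidean norm: a conditional drift bound `E[‖X_{t+1}‖² | ℱ_t] ≤ ‖X_t‖² − 2ε‖X_t‖₁ + K`
implies that the Cesàro averages of `E[‖X_t‖₁]` have limsup at most `K/(2ε)`, and in
particular are uniformly bounded (strong stability). -/
theorem foster_lyapunov_strong_stability
    {Ω : Type*} {m0 : MeasurableSpace Ω} (μ : Measure Ω) [IsProbabilityMeasure μ]
    (ℱ : Filtration ℕ m0) (n : ℕ) (X : ℕ → Ω → Fin n → ℝ)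
    (hadapt : Adapted ℱ X)
    (hint : ∀ t, Integrable (fun ω => ∑ i, (X t ω i) ^ 2) μ)
    (ε K : ℝ) (hε : 0 < ε) (hK : 0 ≤ K)
    (hdrift : ∀ t, ∀ᵐ ω ∂μ,
      (μ[fun ω' => ∑ i, (X (t + 1) ω' i) ^ 2 | ℱ t]) ω
        ≤ ∑ i, (X t ω i) ^ 2 - 2 * ε * (∑ i, |X t ω i|) + K) :
    Filter.limsup
        (fun T : ℕ => (1 / (T : ℝ)) * ∑ t ∈ Finset.range T, ∫ ω, ∑ i, |X t ω i| ∂μ)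
        Filter.atTop ≤ K / (2 * ε) ∧
      ∃ C : ℝ, ∀ T : ℕ, 1 ≤ T →
        (1 / (T : ℝ)) * ∑ t ∈ Finset.range T, ∫ ω, ∑ i, |X t ω i| ∂μ ≤ C := by
  -- measurability of coordinates
  have hmeas : ∀ t, Measurable (fun ω => ∑ i, |X t ω i|) := by
    intro t
    have hm : @Measurable Ω _ (ℱ t) _ (X t) := hadapt t
    refine Finset.measurable_sum _ fun i _ => ?_
    exact (((measurable_pi_apply i).comp hm).mono (ℱ.le t) le_rfl).abs
  -- integrability of ℓ¹ norm
  have hgint : ∀ t, Integrable (fun ω => ∑ i, |X t ω i|) μ := by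
    intro t
    refine Integrable.mono' ((hint t).add (integrable_const (n : ℝ)))
      (hmeas t).aestronglyMeasurable ?_
    filter_upwards with ω
    have h1 : ∀ i : Fin n, |X t ω i| ≤ (X t ω i) ^ 2 + 1 := by
      intro i; nlinarith [sq_nonneg (|X t ω i| - 1), abs_nonneg (X t ω i), sq_abs (X t ω i)]
    have h2 : ∑ i, |X t ω i| ≤ ∑ i, ((X t ω i) ^ 2 + 1) := Finset.sum_le_sum fun i _ => h1 i
    have h3 : (0:ℝ) ≤ ∑ i, |X t ω i| := Finset.sum_nonneg fun i _ => abs_nonneg _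
    rw [Real.norm_of_nonneg h3]
    simpa [Finset.sum_add_distrib] using h2
  set g : ℕ → ℝ := fun t => ∫ ω, ∑ i, |X t ω i| ∂μ with hg
  set f : ℕ → ℝ := fun t => ∫ ω, ∑ i, (X t ω i) ^ 2 ∂μ with hf
  have hgnn : ∀ t, 0 ≤ g t := fun t =>
    integral_nonneg fun ω => Finset.sum_nonneg fun i _ => abs_nonneg _
  have hfnn : ∀ t, 0 ≤ f t := fun t =>
    integral_nonneg fun ω => Finset.sum_nonneg fun i _ => sq_nonneg _
  -- one-step integrated drift
  have hstep : ∀ t, f (t + 1) ≤ f t - 2 * ε * g t + K := by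
    intro t
    have hce : ∫ ω, (μ[fun ω' => ∑ i, (X (t + 1) ω' i) ^ 2 | ℱ t]) ω ∂μ = f (t + 1) :=
      integral_condExp (ℱ.le t)
    have hd : Integrable (fun ω => ∑ i, (X t ω i) ^ 2 - 2 * ε * (∑ i, |X t ω i|)) μ :=
      (hint t).sub ((hgint t).const_mul _)
    have hrhs : Integrable
        (fun ω => ∑ i, (X t ω i) ^ 2 - 2 * ε * (∑ i, |X t ω i|) + K) μ :=
      hd.add (integrable_const K)
    have hmono := integral_mono_ae (integrable_condExp) hrhs (hdrift t)
    rw [hce] at hmono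
    calc f (t + 1) ≤ ∫ ω, (∑ i, (X t ω i) ^ 2 - 2 * ε * (∑ i, |X t ω i|) + K) ∂μ := hmono
      _ = f t - 2 * ε * g t + K := by
          rw [integral_add hd (integrable_const K),
            integral_sub (hint t) ((hgint t).const_mul _), integral_const,
            integral_const_mul]
          simp [hf, hg]
  -- telescoped bound
  have hsum' : ∀ T : ℕ, 2 * ε * ∑ t ∈ Finset.range T, g t + f T ≤ f 0 + T * K := by
    intro T
    induction T with
    | zero => simp
    | succ T ih =>
      have h1 := hstep T
      rw [Finset.sum_range_succ]
      push_cast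
      nlinarith
  have hsum : ∀ T : ℕ, 2 * ε * ∑ t ∈ Finset.range T, g t ≤ f 0 + T * K := fun T =>
    le_trans (le_add_of_nonneg_right (hfnn T)) (hsum' T)
  -- per-T bound on the Cesàro average
  have hbound : ∀ T : ℕ, 1 ≤ T →
      (1 / (T : ℝ)) * ∑ t ∈ Finset.range T, g t ≤ f 0 / (2 * ε) * (1 / T) + K / (2 * ε) := by
    intro T hT
    have hT0 : (0:ℝ) < T := by exact_mod_cast hT
    have key : (1 / (T:ℝ)) * ∑ t ∈ Finset.range T, g t ≤ (f 0 + T * K) / (2 * ε * T) := by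
      rw [le_div_iff₀ (by positivity)]
      have heq : (1/(T:ℝ)) * (∑ t ∈ Finset.range T, g t) * (2*ε*T)
          = 2 * ε * ∑ t ∈ Finset.range T, g t := by field_simp
      rw [heq]; exact hsum T
    refine key.trans (le_of_eq ?_)
    field_simp
  have C := f 0 / (2 * ε) + K / (2 * ε)
  constructor
  · -- limsup bound
    have hb : Tendsto (fun T : ℕ => f 0 / (2 * ε) * (1 / T) + K / (2 * ε)) atTop
        (nhds (K / (2 * ε))) := by
      have h1 : Tendsto (fun T : ℕ => f 0 / (2 * ε) * (1 / (T:ℝ))) atTop (nhds 0) := by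
        simpa using (tendsto_one_div_atTop_nhds_zero_nat).const_mul (f 0 / (2 * ε))
      simpa using h1.add tendsto_const_nhds
    have hEv : ∀ᶠ T : ℕ in atTop,
        (1 / (T : ℝ)) * ∑ t ∈ Finset.range T, g t
          ≤ f 0 / (2 * ε) * (1 / T) + K / (2 * ε) := by
      filter_upwards [eventually_ge_atTop 1] with T hT using hbound T hT
    calc Filter.limsup (fun T : ℕ => (1 / (T : ℝ)) * ∑ t ∈ Finset.range T, g t) atTop
        ≤ Filter.limsup (fun T : ℕ => f 0 / (2 * ε) * (1 / T) + K / (2 * ε)) atTop := by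
          refine Filter.limsup_le_limsup hEv ?_ ?_
          · refine isCoboundedUnder_le_of_le atTop (x := 0) fun T => ?_
            exact mul_nonneg (by positivity) (Finset.sum_nonneg fun t _ => hgnn t)
          · exact hb.isBoundedUnder_le
      _ = K / (2 * ε) := hb.limsup_eq
  · refine ⟨f 0 / (2 * ε) + K / (2 * ε), fun T hT => ?_⟩
    have hT0 : (0:ℝ) < T := by exact_mod_cast hT
    refine (hbound T hT).trans ?_
    have h1 : (1:ℝ)/T ≤ 1 := by
      rw [div_le_one hT0]; exact_mod_cast hT
    have hf0 : 0 ≤ f 0 / (2 * ε) := div_nonneg (hfnn 0) (by positivity)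
    nlinarith
end
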